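/- Let G be a regular caterpillar with an even number s = 2k ≥ 2 of spine vertices, each spine vertex having exactly Δ ≥ 1 legs, so that G has n = 2k(Δ+1) vertices. Then there exists a labeling of G with differential value at least n/2; consequently the differential chromatic number of G equals n/2. -/

import Mathlib

/-- A labeling of the vertices of a finite graph on `n` vertices: a one-to-one
assignment of the numbers `1, …, n` to the vertices. -/
def IsLabeling {V : Type*} [Fintype V] (c : V → ℕ) : Prop :=
  Function.Injective c ∧ ∀ v, c v ∈ Finset.Icc 1 (Fintype.card V)

/-- The differential value of the labeling `c` is at least `d`: every edge has
label difference at least `d`. -/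
def DiffValAtLeast {V : Type*} (G : SimpleGraph V) (c : V → ℕ) (d : ℕ) : Prop :=
  ∀ u v, G.Adj u v → d ≤ Nat.dist (c u) (c v)

/-- The differential chromatic number: the maximum, over all labelings, of the
minimum label difference over the edges. -/
noncomputable def diffChromNum {V : Type*} [Fintype V] (G : SimpleGraph V) : ℕ :=
  sSup {d : ℕ | ∃ c : V → ℕ, IsLabeling c ∧ DiffValAtLeast G c d}

/-- The regular caterpillar with spine vertices `(i, 0)` for `i : Fin s` forming a
path, each spine vertex `(i, 0)` adjacent to its `Δ` legs `(i, j)`, `j ≠ 0`. -/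
def regularCaterpillar (s Δ : ℕ) : SimpleGraph (Fin s × Fin (Δ + 1)) :=
  SimpleGraph.fromRel (fun a b =>
    (a.2 = 0 ∧ b.2 = 0 ∧ (a.1 : ℕ) + 1 = (b.1 : ℕ)) ∨
    (a.1 = b.1 ∧ a.2 = 0 ∧ b.2 ≠ 0))

/-- The explicit labeling function, on raw naturals. -/
def catF (k Δ i j : ℕ) : ℕ :=
  if j = 0 then (if i % 2 = 0 then i / 2 + 1 else k * (Δ + 1) + k * Δ + i / 2 + 1)
  else (if i % 2 = 0 then k * (Δ + 1) + (i / 2) * Δ + j else k + (i / 2) * Δ + j)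

lemma mul_add_inj {Δ a b j j' : ℕ} (hj : 1 ≤ j) (hjd : j ≤ Δ) (hj' : 1 ≤ j')
    (hjd' : j' ≤ Δ) (h : a * Δ + j = b * Δ + j') : a = b ∧ j = j' := by
  rcases lt_trichotomy a b with h1 | h1 | h1
  · have h2 : (a + 1) * Δ ≤ b * Δ := Nat.mul_le_mul_right _ h1
    rw [add_mul, one_mul] at h2; omega
  · subst h1; omega
  · have h2 : (b + 1) * Δ ≤ a * Δ := Nat.mul_le_mul_right _ h1
    rw [add_mul, one_mul] at h2; omega

lemma catF_inj (k Δ : ℕ) (hΔ : 1 ≤ Δ) {i j i' j' : ℕ}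
    (hi : i < 2 * k) (hi' : i' < 2 * k) (hj : j < Δ + 1) (hj' : j' < Δ + 1)
    (h : catF k Δ i j = catF k Δ i' j') : i = i' ∧ j = j' := by
  have hm : k * (Δ + 1) = k * Δ + k := by ring
  have B1 : i / 2 * Δ + Δ ≤ k * Δ := by
    have h5 : (i / 2 + 1) * Δ ≤ k * Δ := Nat.mul_le_mul_right _ (by omega)
    rw [add_mul, one_mul] at h5; exact h5
  have B1' : i' / 2 * Δ + Δ ≤ k * Δ := by
    have h5 : (i' / 2 + 1) * Δ ≤ k * Δ := Nat.mul_le_mul_right _ (by omega)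
    rw [add_mul, one_mul] at h5; exact h5
  rcases eq_or_ne j 0 with hj0 | hj0 <;> rcases eq_or_ne j' 0 with hj0' | hj0' <;>
    rcases Nat.mod_two_eq_zero_or_one i with hp | hp <;>
    rcases Nat.mod_two_eq_zero_or_one i' with hp' | hp' <;>
    simp [catF, hj0, hj0', hp, hp'] at h <;>
    first
      | omega
      | (have := mul_add_inj (Δ := Δ) (a := i / 2) (b := i' / 2) (j := j) (j' := j')
            (by omega) (by omega) (by omega) (by omega) (by omega); omega)

lemma catF_mem (k Δ : ℕ) (hk : 1 ≤ k) (hΔ : 1 ≤ Δ) {i j : ℕ}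
    (hi : i < 2 * k) (hj : j < Δ + 1) :
    1 ≤ catF k Δ i j ∧ catF k Δ i j ≤ 2 * (k * (Δ + 1)) := by
  have hm : k * (Δ + 1) = k * Δ + k := by ring
  have B1 : i / 2 * Δ + Δ ≤ k * Δ := by
    have h5 : (i / 2 + 1) * Δ ≤ k * Δ := Nat.mul_le_mul_right _ (by omega)
    rw [add_mul, one_mul] at h5; exact h5
  rcases eq_or_ne j 0 with hj0 | hj0 <;>
    rcases Nat.mod_two_eq_zero_or_one i with hp | hp <;>
    simp [catF, hj0, hp] <;> omega

lemma catF_dist (k Δ : ℕ) (hk : 1 ≤ k) (hΔ : 1 ≤ Δ) {i j i' j' : ℕ}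
    (hi : i < 2 * k) (hi' : i' < 2 * k) (hj : j < Δ + 1) (hj' : j' < Δ + 1)
    (h : (j = 0 ∧ j' = 0 ∧ i + 1 = i') ∨ (i = i' ∧ j = 0 ∧ j' ≠ 0)) :
    k * (Δ + 1) ≤ Nat.dist (catF k Δ i j) (catF k Δ i' j') := by
  have hm : k * (Δ + 1) = k * Δ + k := by ring
  have hkΔ : k ≤ k * Δ := Nat.le_mul_of_pos_right k hΔ
  have htΔ : i / 2 ≤ i / 2 * Δ := Nat.le_mul_of_pos_right _ hΔ
  obtain ⟨u, hu⟩ : ∃ u, k = i / 2 + u + 1 := ⟨k - i / 2 - 1, by omega⟩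
  have h3 : k * Δ = i / 2 * Δ + u * Δ + Δ := by rw [hu]; ring
  have h4 : u ≤ u * Δ := Nat.le_mul_of_pos_right _ hΔ
  rcases h with ⟨rfl, rfl, rfl⟩ | ⟨rfl, rfl, hne⟩
  · rcases Nat.mod_two_eq_zero_or_one i with hp | hp <;>
      have hp' : (i + 1) % 2 = 1 - i % 2 := by omega
    all_goals simp [catF, hp, hp', Nat.dist] <;> omega
  · rcases Nat.mod_two_eq_zero_or_one i with hp | hp <;>
      simp [catF, hp, hne, Nat.dist] <;> omega

/-- A regular caterpillar with an even number `s = 2k ≥ 2` of spine vertices and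
`Δ ≥ 1` legs per spine vertex (`n = 2k(Δ+1)`) admits a labeling of differential
value at least `n/2 = k(Δ+1)`, and its differential chromatic number equals `n/2`. -/
theorem stmt_6 (k Δ : ℕ) (hk : 1 ≤ k) (hΔ : 1 ≤ Δ) :
    (∃ c : Fin (2 * k) × Fin (Δ + 1) → ℕ, IsLabeling c ∧
      DiffValAtLeast (regularCaterpillar (2 * k) Δ) c (k * (Δ + 1))) ∧
    diffChromNum (regularCaterpillar (2 * k) Δ) = k * (Δ + 1) := by
  set m := k * (Δ + 1) with hmdef
  have hm1 : 1 ≤ m := Nat.one_le_iff_ne_zero.2 (by positivity)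
  have hcard : Fintype.card (Fin (2 * k) × Fin (Δ + 1)) = 2 * m := by
    simp [Fintype.card_prod, hmdef]; ring
  set c : Fin (2 * k) × Fin (Δ + 1) → ℕ := fun p => catF k Δ p.1 p.2 with hc
  have hlab : IsLabeling c := by
    constructor
    · intro p q h
      obtain ⟨h1, h2⟩ := catF_inj k Δ hΔ p.1.isLt q.1.isLt p.2.isLt q.2.isLt h
      exact Prod.ext (Fin.ext h1) (Fin.ext h2)
    · intro v
      rw [hcard, Finset.mem_Icc]
      exact catF_mem k Δ hk hΔ v.1.isLt v.2.isLt
  have hdva : DiffValAtLeast (regularCaterpillar (2 * k) Δ) c m := by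
    intro u v huv
    rw [regularCaterpillar, SimpleGraph.fromRel_adj] at huv
    obtain ⟨hne, h | h⟩ := huv
    · refine catF_dist k Δ hk hΔ u.1.isLt v.1.isLt u.2.isLt v.2.isLt ?_
      simpa only [Fin.ext_iff, Fin.val_zero, ne_eq] using h
    · rw [Nat.dist_comm]
      refine catF_dist k Δ hk hΔ v.1.isLt u.1.isLt v.2.isLt u.2.isLt ?_
      simpa only [Fin.ext_iff, Fin.val_zero, ne_eq] using h
  have hmemS : m ∈ {d : ℕ | ∃ c : Fin (2 * k) × Fin (Δ + 1) → ℕ,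
      IsLabeling c ∧ DiffValAtLeast (regularCaterpillar (2 * k) Δ) c d} := ⟨c, hlab, hdva⟩
  have hub : ∀ d ∈ {d : ℕ | ∃ c : Fin (2 * k) × Fin (Δ + 1) → ℕ,
      IsLabeling c ∧ DiffValAtLeast (regularCaterpillar (2 * k) Δ) c d}, d ≤ m := by
    rintro d ⟨c', ⟨hinj', hmem'⟩, hdv'⟩
    by_contra hlt
    push_neg at hlt
    rw [hcard] at hmem'
    -- c' is surjective onto Icc 1 (2*m)
    have hsurj : ∃ v, c' v = m + 1 := by
      set g : Fin (2 * k) × Fin (Δ + 1) → ↑(Finset.Icc 1 (2 * m)) :=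
        fun v => ⟨c' v, hmem' v⟩ with hg
      have hginj : Function.Injective g := by
        intro a b hab
        exact hinj' (Subtype.ext_iff.1 hab)
      have hgcard : Fintype.card (Fin (2 * k) × Fin (Δ + 1)) =
          Fintype.card ↑(Finset.Icc 1 (2 * m)) := by
        rw [hcard, Fintype.card_coe, Nat.card_Icc]; omega
      have hbij : Function.Bijective g :=
        (Fintype.bijective_iff_injective_and_card g).2 ⟨hginj, hgcard⟩
      obtain ⟨v, hv⟩ := hbij.2 ⟨m + 1, by rw [Finset.mem_Icc]; omega⟩
      exact ⟨v, congrArg Subtype.val hv⟩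
    obtain ⟨v, hv⟩ := hsurj
    -- v has a neighbor u
    have hnb : ∃ u, (regularCaterpillar (2 * k) Δ).Adj v u := by
      by_cases j0 : v.2 = 0
      · refine ⟨(v.1, ⟨1, by omega⟩), ?_⟩
        rw [regularCaterpillar, SimpleGraph.fromRel_adj]
        refine ⟨?_, Or.inl (Or.inr ⟨rfl, j0, by simp [Fin.ext_iff]⟩)⟩
        intro h
        have := congrArg (fun p => (p.2 : ℕ)) h
        simp [j0] at this
      · refine ⟨(v.1, 0), ?_⟩
        rw [regularCaterpillar, SimpleGraph.fromRel_adj]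
        exact ⟨by simp [Prod.ext_iff, j0], Or.inr (Or.inr ⟨rfl, rfl, j0⟩)⟩
    obtain ⟨u, hadj⟩ := hnb
    have hd := hdv' v u hadj
    have hu := hmem' u
    rw [Finset.mem_Icc] at hu
    rw [hv] at hd
    simp [Nat.dist] at hd
    omega
  refine ⟨⟨c, hlab, hdva⟩, ?_⟩
  rw [diffChromNum]
  exact le_antisymm (csSup_le ⟨m, hmemS⟩ hub) (le_csSup ⟨m, hub⟩ hmemS)
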